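/- If P is a substochastic-type matrix of the form P^T Γ where P is stochastic and Γ diagonal with entries in [0,1] and at least one diagonal entry of Γ strictly less than 1, and P is irreducible, then ρ(P^T Γ) < 1 and hence I − P^T Γ is invertible with inverse Σ_{k≥0} (P^T Γ)^k. -/

import Mathlib

open Matrix

noncomputable def specRad {n : ℕ} (Y : Matrix (Fin n) (Fin n) ℝ) : ℝ :=
  sSup ((fun μ => ‖μ‖) '' spectrum ℂ (Y.map ((↑) : ℝ → ℂ)))

section Aux

open Finset

lemma aux_pow_nonneg {n : ℕ} (B : Matrix (Fin n) (Fin n) ℝ)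
    (h0 : ∀ i j, 0 ≤ B i j) (m : ℕ) : ∀ i j, 0 ≤ (B ^ m) i j := by
  induction m with
  | zero =>
    intro i j
    rw [pow_zero]
    by_cases h : i = j
    · subst h; rw [Matrix.one_apply_eq]; norm_num
    · rw [Matrix.one_apply_ne h]
  | succ m ih =>
    intro i j
    rw [pow_succ, Matrix.mul_apply]
    exact Finset.sum_nonneg fun k _ => mul_nonneg (ih i k) (h0 k j)

lemma aux_mul_rowsum {n : ℕ} (B X : Matrix (Fin n) (Fin n) ℝ) (i : Fin n) :
    ∑ j, (B * X) i j = ∑ k, B i k * ∑ j, X k j := by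
  simp_rw [Matrix.mul_apply, Finset.mul_sum]
  exact Finset.sum_comm

lemma aux_rowsum_le_one {n : ℕ} (B : Matrix (Fin n) (Fin n) ℝ)
    (h0 : ∀ i j, 0 ≤ B i j) (h1 : ∀ i, ∑ j, B i j ≤ 1) (m : ℕ) (i : Fin n) :
    ∑ j, (B ^ m) i j ≤ 1 := by
  induction m generalizing i with
  | zero => simp [Matrix.one_apply]
  | succ m ih =>
    rw [pow_succ', aux_mul_rowsum]
    calc ∑ k, B i k * ∑ j, (B ^ m) k j ≤ ∑ k, B i k := by
          refine Finset.sum_le_sum fun k _ => ?_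
          exact mul_le_of_le_one_right (h0 i k) (ih k)
      _ ≤ 1 := h1 i

lemma aux_rowsum_anti {n : ℕ} (B : Matrix (Fin n) (Fin n) ℝ)
    (h0 : ∀ i j, 0 ≤ B i j) (h1 : ∀ i, ∑ j, B i j ≤ 1) {m m' : ℕ} (h : m ≤ m')
    (i : Fin n) : ∑ j, (B ^ m') i j ≤ ∑ j, (B ^ m) i j := by
  have hstep : ∀ m : ℕ, ∀ i, ∑ j, (B ^ (m + 1)) i j ≤ ∑ j, (B ^ m) i j := by
    intro m
    induction m with
    | zero =>
      intro i
      simpa [Matrix.one_apply] using h1 i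
    | succ m ih =>
      intro i
      have e1 : ∑ j, (B ^ (m + 1 + 1)) i j = ∑ k, B i k * ∑ j, (B ^ (m + 1)) k j := by
        rw [pow_succ' B (m + 1), aux_mul_rowsum]
      have e2 : ∑ j, (B ^ (m + 1)) i j = ∑ k, B i k * ∑ j, (B ^ m) k j := by
        rw [pow_succ' B m, aux_mul_rowsum]
      rw [e1, e2]
      refine Finset.sum_le_sum fun k _ => mul_le_mul_of_nonneg_left ?_ (h0 i k)
      exact ih k
  exact antitone_nat_of_succ_le (f := fun m => ∑ j, (B ^ m) i j) (fun m => hstep m i) h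

section NormInstances

attribute [local instance] Matrix.linftyOpNormedAddCommGroup Matrix.linftyOpNormedRing
  Matrix.linftyOpNormedAlgebra

lemma aux_norm_lt {n : ℕ} (X : Matrix (Fin n) (Fin n) ℝ)
    (h0 : ∀ i j, 0 ≤ X i j) (hlt : ∀ i, ∑ j, X i j < 1) : ‖X‖ < 1 := by
  rw [Matrix.linfty_opNorm_def]
  have : ((Finset.univ : Finset (Fin n)).sup fun i => ∑ j, ‖X i j‖₊) < 1 := by
    rw [Finset.sup_lt_iff (by norm_num : (⊥ : NNReal) < 1)]
    intro i _
    rw [← NNReal.coe_lt_coe, NNReal.coe_sum, NNReal.coe_one]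
    have : ∀ j, ((‖X i j‖₊ : ℝ)) = X i j := fun j => by
      rw [coe_nnnorm, Real.norm_eq_abs, abs_of_nonneg (h0 i j)]
    simp_rw [this]
    exact hlt i
  exact_mod_cast this

lemma aux_rowsum_le_norm {n : ℕ} (X : Matrix (Fin n) (Fin n) ℝ)
    (h0 : ∀ i j, 0 ≤ X i j) (i : Fin n) : ∑ j, X i j ≤ ‖X‖ := by
  rw [Matrix.linfty_opNorm_def]
  have h1 : (∑ j, ‖X i j‖₊) ≤ ((Finset.univ : Finset (Fin n)).sup fun i => ∑ j, ‖X i j‖₊) :=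
    Finset.le_sup (f := fun i => ∑ j, ‖X i j‖₊) (Finset.mem_univ i)
  have h2 : ((∑ j, ‖X i j‖₊ : NNReal) : ℝ) = ∑ j, X i j := by
    rw [NNReal.coe_sum]
    refine Finset.sum_congr rfl fun j _ => ?_
    rw [coe_nnnorm, Real.norm_eq_abs, abs_of_nonneg (h0 i j)]
  rw [← h2]
  exact_mod_cast h1

lemma aux_eig {n : ℕ} (X : Matrix (Fin n) (Fin n) ℝ) (h0 : ∀ i j, 0 ≤ X i j) (μ : ℂ)
    (hμ : μ ∈ spectrum ℂ (X.map ((↑) : ℝ → ℂ))) (m : ℕ) (c : ℝ)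
    (hc : ∀ i, ∑ j, (X ^ m) i j ≤ c) : ‖μ‖ ^ m ≤ c := by
  classical
  set C : Matrix (Fin n) (Fin n) ℂ := X.map ((↑) : ℝ → ℂ) with hC
  have hev : Module.End.HasEigenvalue (Matrix.toLinAlgEquiv' C) μ := by
    rw [Module.End.hasEigenvalue_iff_mem_spectrum, AlgEquiv.spectrum_eq]
    exact hμ
  obtain ⟨v, hv⟩ := hev.exists_hasEigenvector
  have hv0 : v ≠ 0 := hv.2
  have hmv : C.mulVec v = μ • v := by
    have := hv.apply_eq_smul
    rwa [Matrix.toLinAlgEquiv'_apply] at this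
  have hpow : ∀ q : ℕ, (C ^ q).mulVec v = (μ ^ q) • v := by
    intro q
    induction q with
    | zero => simp [Matrix.one_mulVec]
    | succ q ih =>
      rw [pow_succ' C q, ← Matrix.mulVec_mulVec, ih, Matrix.mulVec_smul, hmv, smul_smul,
        ← pow_succ]
  have hCpow : ∀ q : ℕ, C ^ q = (X ^ q).map ((↑) : ℝ → ℂ) := by
    intro q
    have := map_pow
      (Complex.ofRealHom.mapMatrix : Matrix (Fin n) (Fin n) ℝ →+* Matrix (Fin n) (Fin n) ℂ) X q
    exact this.symm
  obtain ⟨j₀, hj₀⟩ := Function.ne_iff.mp hv0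
  obtain ⟨i, -, hi⟩ := Finset.exists_max_image Finset.univ (fun j => ‖v j‖)
    ⟨j₀, Finset.mem_univ j₀⟩
  have hj₀' : v j₀ ≠ 0 := by simpa using hj₀
  have hvi : 0 < ‖v i‖ :=
    lt_of_lt_of_le (norm_pos_iff.mpr hj₀') (hi j₀ (Finset.mem_univ j₀))
  have key : ‖μ‖ ^ m * ‖v i‖ ≤ c * ‖v i‖ := by
    calc ‖μ‖ ^ m * ‖v i‖ = ‖μ ^ m * v i‖ := by
          rw [norm_mul, norm_pow]
      _ = ‖((C ^ m).mulVec v) i‖ := by rw [hpow m]; rfl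
      _ = ‖∑ j, (((X ^ m) i j : ℝ) : ℂ) * v j‖ := by
          rw [hCpow m]
          congr 1
      _ ≤ ∑ j, ‖(((X ^ m) i j : ℝ) : ℂ) * v j‖ :=
          norm_sum_le _ _
      _ = ∑ j, (X ^ m) i j * ‖v j‖ := by
          refine Finset.sum_congr rfl fun j _ => ?_
          rw [norm_mul, Complex.norm_real, Real.norm_eq_abs, abs_of_nonneg (aux_pow_nonneg X h0 m i j)]
      _ ≤ ∑ j, (X ^ m) i j * ‖v i‖ := by
          refine Finset.sum_le_sum fun j _ => ?_
          exact mul_le_mul_of_nonneg_left (hi j (Finset.mem_univ j))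
            (aux_pow_nonneg X h0 m i j)
      _ = (∑ j, (X ^ m) i j) * ‖v i‖ := by rw [← Finset.sum_mul]
      _ ≤ c * ‖v i‖ :=
          mul_le_mul_of_nonneg_right (hc i) (norm_nonneg _)
  exact le_of_mul_le_mul_right key hvi

lemma aux_spec {n : ℕ} (X : Matrix (Fin n) (Fin n) ℝ) (M : ℕ) (hM : 0 < M)
    (h0 : ∀ i j, 0 ≤ X i j) (hlt : ∀ i, ∑ j, (X ^ M) i j < 1) :
    sSup ((fun μ => ‖μ‖) '' spectrum ℂ (X.map ((↑) : ℝ → ℂ))) < 1 := by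
  have hXM0 : ∀ i j, 0 ≤ (X ^ M) i j := aux_pow_nonneg X h0 M
  have hnorm : ‖X ^ M‖ < 1 := aux_norm_lt _ hXM0 hlt
  have hnn : (0 : ℝ) ≤ ‖X ^ M‖ := norm_nonneg _
  have hMne : (M : ℝ) ≠ 0 := Nat.cast_ne_zero.mpr hM.ne'
  set t : ℝ := ‖X ^ M‖ ^ ((M : ℝ)⁻¹) with ht
  have ht0 : 0 ≤ t := Real.rpow_nonneg hnn _
  have ht1 : t < 1 := Real.rpow_lt_one hnn hnorm (by positivity)
  refine lt_of_le_of_lt (Real.sSup_le ?_ ht0) ht1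
  rintro x ⟨μ, hμ, rfl⟩
  have hb : ‖μ‖ ^ M ≤ ‖X ^ M‖ :=
    aux_eig X h0 μ hμ M _ (fun i => aux_rowsum_le_norm _ hXM0 i)
  calc ‖μ‖ = (‖μ‖ ^ M) ^ ((M : ℝ)⁻¹) := by
        rw [← Real.rpow_natCast ‖μ‖ M, ← Real.rpow_mul (norm_nonneg _),
          mul_inv_cancel₀ hMne, Real.rpow_one]
    _ ≤ t := Real.rpow_le_rpow (pow_nonneg (norm_nonneg _) _) hb (by positivity)

lemma aux_summable {n : ℕ} (A : Matrix (Fin n) (Fin n) ℝ) (M : ℕ) (hM : 0 < M)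
    (h : ‖A ^ M‖ < 1) : Summable (fun k : ℕ => A ^ k) := by
  set ρ : ℝ := max ‖A ^ M‖ (1 / 2) with hρdef
  have hρ0 : (0 : ℝ) < ρ := lt_of_lt_of_le (by norm_num) (le_max_right _ _)
  have hρ1 : ρ < 1 := max_lt h (by norm_num)
  have hρA : ‖A ^ M‖ ≤ ρ := le_max_left _ _
  set t : ℝ := ρ ^ ((M : ℝ)⁻¹) with htdef
  have ht0 : 0 < t := Real.rpow_pos_of_pos hρ0 _
  have ht1 : t < 1 := Real.rpow_lt_one hρ0.le hρ1 (by positivity)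
  have hMne : (M : ℝ) ≠ 0 := Nat.cast_ne_zero.mpr hM.ne'
  have htpow : ∀ q : ℕ, t ^ (M * q) = ρ ^ q := by
    intro q
    rw [← Real.rpow_natCast t (M * q), htdef, ← Real.rpow_mul hρ0.le,
      ← Real.rpow_natCast ρ q]
    congr 1
    push_cast
    field_simp
  have hsub : ∀ q s : ℕ, ‖(A ^ M) ^ q * A ^ s‖ ≤ ρ ^ q * ‖A ^ s‖ := by
    intro q s
    induction q with
    | zero => simp
    | succ q ih =>
      rw [pow_succ' (A ^ M) q, mul_assoc]
      calc ‖A ^ M * ((A ^ M) ^ q * A ^ s)‖ ≤ ‖A ^ M‖ * ‖(A ^ M) ^ q * A ^ s‖ :=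
            norm_mul_le _ _
        _ ≤ ρ * (ρ ^ q * ‖A ^ s‖) :=
            mul_le_mul hρA ih (norm_nonneg _) hρ0.le
        _ = ρ ^ (q + 1) * ‖A ^ s‖ := by ring
  set C : ℝ := ∑ s ∈ Finset.range M, ‖A ^ s‖ / t ^ s with hCdef
  have hbound : ∀ k, ‖A ^ k‖ ≤ C * t ^ k := by
    intro k
    have hk : M * (k / M) + k % M = k := Nat.div_add_mod k M
    set q := k / M with hq
    set s := k % M with hs
    have hsM : s < M := Nat.mod_lt _ hM
    have h1 : ‖A ^ k‖ ≤ ρ ^ q * ‖A ^ s‖ := by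
      have : A ^ k = (A ^ M) ^ q * A ^ s := by
        rw [← pow_mul, ← pow_add, hk]
      rw [this]
      exact hsub q s
    have h2 : ρ ^ q * ‖A ^ s‖ = (‖A ^ s‖ / t ^ s) * t ^ k := by
      have : t ^ k = ρ ^ q * t ^ s := by
        rw [← hk, pow_add, htpow]
      rw [this]
      field_simp
    have h3 : (‖A ^ s‖ / t ^ s) * t ^ k ≤ C * t ^ k := by
      refine mul_le_mul_of_nonneg_right ?_ (by positivity)
      exact Finset.single_le_sum (f := fun s => ‖A ^ s‖ / t ^ s)
        (fun i _ => by positivity) (Finset.mem_range.mpr hsM)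
    linarith
  refine Summable.of_norm ?_
  exact Summable.of_nonneg_of_le (fun k => norm_nonneg _) hbound
    ((summable_geometric_of_lt_one ht0.le ht1).mul_left C)

lemma aux_geomT {n : ℕ} (A : Matrix (Fin n) (Fin n) ℝ) (M : ℕ) (hM : 0 < M)
    (h0 : ∀ i j, 0 ≤ ((Aᵀ) ^ M) i j) (hlt : ∀ i, ∑ j, ((Aᵀ) ^ M) i j < 1) :
    ∃ S, HasSum (fun k : ℕ => A ^ k) S ∧ (1 - A) * S = 1 ∧ S * (1 - A) = 1 := by
  have hnorm : ‖(Aᵀ) ^ M‖ < 1 := aux_norm_lt _ h0 hlt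
  have hsB : Summable (fun k : ℕ => (Aᵀ) ^ k) := aux_summable _ M hM hnorm
  have hsA : Summable (fun k : ℕ => A ^ k) := by
    have hcont : Continuous (fun X : Matrix (Fin n) (Fin n) ℝ => Xᵀ) :=
      Continuous.matrix_transpose continuous_id
    have := hsB.map (Matrix.transposeAddEquiv (Fin n) (Fin n) ℝ).toAddMonoidHom hcont
    refine this.congr fun k => ?_
    show ((Aᵀ) ^ k)ᵀ = A ^ k
    rw [Matrix.transpose_pow, Matrix.transpose_transpose]
  set S := ∑' k : ℕ, A ^ k with hSdef
  have hS : HasSum (fun k : ℕ => A ^ k) S := hsA.hasSum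
  have hz : Filter.Tendsto (fun k : ℕ => A ^ k) Filter.atTop (nhds 0) :=
    hsA.tendsto_atTop_zero
  have hs1 : Summable (fun k : ℕ => A ^ (k + 1)) := (summable_nat_add_iff 1).mpr hsA
  have hdiff : Summable (fun k : ℕ => A ^ k - A ^ (k + 1)) := hsA.sub hs1
  have htel : HasSum (fun k : ℕ => A ^ k - A ^ (k + 1)) 1 := by
    have h1 := hdiff.hasSum
    have h2 := h1.tendsto_sum_nat
    have heq : ∀ N, ∑ k ∈ Finset.range N, (A ^ k - A ^ (k + 1)) = 1 - A ^ N := by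
      intro N
      rw [Finset.sum_range_sub' (fun k => A ^ k) N, pow_zero]
    have h3 : Filter.Tendsto (fun N => ∑ k ∈ Finset.range N, (A ^ k - A ^ (k + 1)))
        Filter.atTop (nhds (1 - 0)) := by
      simp_rw [heq]
      exact Filter.Tendsto.sub tendsto_const_nhds hz
    have h4 := tendsto_nhds_unique h2 h3
    rw [sub_zero] at h4
    rwa [h4] at h1
  have e1 : (1 - A) * S = 1 := by
    have h4 : HasSum (fun k : ℕ => (1 - A) * A ^ k) ((1 - A) * S) := hS.mul_left _
    have h5 : (fun k : ℕ => (1 - A) * A ^ k) = fun k : ℕ => A ^ k - A ^ (k + 1) := by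
      funext k
      rw [sub_mul, one_mul, ← pow_succ']
    rw [h5] at h4
    exact h4.unique htel
  have e2 : S * (1 - A) = 1 := by
    have h4 : HasSum (fun k : ℕ => A ^ k * (1 - A)) (S * (1 - A)) := hS.mul_right _
    have h5 : (fun k : ℕ => A ^ k * (1 - A)) = fun k : ℕ => A ^ k - A ^ (k + 1) := by
      funext k
      rw [mul_sub, mul_one, ← pow_succ]
    rw [h5] at h4
    exact h4.unique htel
  exact ⟨S, hS, e1, e2⟩

end NormInstances

lemma aux_spectrum_transpose {n : ℕ} (X : Matrix (Fin n) (Fin n) ℂ) :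
    spectrum ℂ Xᵀ = spectrum ℂ X := by
  ext μ
  rw [spectrum.mem_iff, spectrum.mem_iff]
  have hT : ((algebraMap ℂ (Matrix (Fin n) (Fin n) ℂ)) μ - Xᵀ)
      = ((algebraMap ℂ (Matrix (Fin n) (Fin n) ℂ)) μ - X)ᵀ := by
    rw [Matrix.transpose_sub]
    congr 1
    rw [Matrix.algebraMap_eq_diagonal, Matrix.diagonal_transpose]
  rw [hT, Matrix.isUnit_iff_isUnit_det, Matrix.det_transpose,
    ← Matrix.isUnit_iff_isUnit_det]

end Aux

theorem stmt_18 {n : ℕ} (P : Matrix (Fin n) (Fin n) ℝ) (γ : Fin n → ℝ)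
    (hPnn : ∀ i j, 0 ≤ P i j) (hProw : ∀ i, ∑ j, P i j = 1)
    (hirr : ∀ i j, ∃ m : ℕ, 0 < (P ^ m) i j)
    (hγ : ∀ i, γ i ∈ Set.Icc (0 : ℝ) 1) (hγlt : ∃ j, γ j < 1) :
    specRad (Pᵀ * Matrix.diagonal γ) < 1 ∧
    IsUnit (1 - Pᵀ * Matrix.diagonal γ) ∧
    HasSum (fun k : ℕ => (Pᵀ * Matrix.diagonal γ) ^ k)
      (1 - Pᵀ * Matrix.diagonal γ)⁻¹ := by
  classical
  obtain ⟨j₀, hj₀⟩ := hγlt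
  set A := Pᵀ * Matrix.diagonal γ with hA
  set B := Matrix.diagonal γ * P with hB
  have hABt : Aᵀ = B := by
    rw [hA, hB, Matrix.transpose_mul, Matrix.transpose_transpose, Matrix.diagonal_transpose]
  have hBapp : ∀ i j, B i j = γ i * P i j := by
    intro i j
    rw [hB, Matrix.diagonal_mul]
  have hB0 : ∀ i j, 0 ≤ B i j := by
    intro i j
    rw [hBapp]
    exact mul_nonneg (hγ i).1 (hPnn i j)
  have hBrow : ∀ i, ∑ j, B i j = γ i := by
    intro i
    simp_rw [hBapp]
    rw [← Finset.mul_sum, hProw, mul_one]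
  have hBrow1 : ∀ i, ∑ j, B i j ≤ 1 := by
    intro i
    rw [hBrow]
    exact (hγ i).2
  -- Claim C: reachability of the leaky state forces a strict row-sum drop
  have claimC : ∀ m : ℕ, ∀ i, 0 < (P ^ m) i j₀ → ∃ M : ℕ, ∑ j, (B ^ M) i j < 1 := by
    intro m
    induction m with
    | zero =>
      intro i h
      have hij : i = j₀ := by
        by_contra hne
        rw [pow_zero, Matrix.one_apply_ne hne] at h
        exact lt_irrefl _ h
      subst hij
      exact ⟨1, by rw [pow_one, hBrow]; exact hj₀⟩
    | succ m ih =>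
      intro i h
      rw [pow_succ', Matrix.mul_apply] at h
      obtain ⟨k, -, hk⟩ : ∃ k ∈ Finset.univ, 0 < P i k * (P ^ m) k j₀ := by
        by_contra hc
        push_neg at hc
        have : ∑ k, P i k * (P ^ m) k j₀ ≤ 0 :=
          Finset.sum_nonpos fun k hk => hc k hk
        exact absurd h (not_lt.mpr this)
      have hPik : 0 < P i k := by
        rcases (hPnn i k).lt_or_eq with h' | h'
        · exact h'
        · rw [← h', zero_mul] at hk; exact absurd hk (lt_irrefl 0)
      have hPmk : 0 < (P ^ m) k j₀ := by
        rcases (aux_pow_nonneg P hPnn m k j₀).lt_or_eq with h' | h'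
        · exact h'
        · rw [← h', mul_zero] at hk; exact absurd hk (lt_irrefl 0)
      rcases lt_or_ge (γ i) 1 with hγi | hγi
      · exact ⟨1, by rw [pow_one, hBrow]; exact hγi⟩
      · have hγieq : γ i = 1 := le_antisymm (hγ i).2 hγi
        obtain ⟨M₀, hM₀⟩ := ih k hPmk
        refine ⟨M₀ + 1, ?_⟩
        rw [pow_succ', aux_mul_rowsum]
        calc ∑ l, B i l * ∑ j, (B ^ M₀) l j < ∑ l, B i l := by
              refine Finset.sum_lt_sum (fun l _ => ?_) ⟨k, Finset.mem_univ k, ?_⟩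
              · exact mul_le_of_le_one_right (hB0 i l)
                  (aux_rowsum_le_one B hB0 hBrow1 M₀ l)
              · have hBik : 0 < B i k := by
                  rw [hBapp, hγieq, one_mul]; exact hPik
                calc B i k * ∑ j, (B ^ M₀) k j < B i k * 1 :=
                      mul_lt_mul_of_pos_left hM₀ hBik
                  _ = B i k := mul_one _
          _ = γ i := hBrow i
          _ = 1 := hγieq
  -- Claim D: a uniform power with all row sums < 1
  obtain ⟨M, hM0, hMlt⟩ : ∃ M : ℕ, 0 < M ∧ ∀ i, ∑ j, (B ^ M) i j < 1 := by
    have key : ∀ i, ∃ M : ℕ, ∑ j, (B ^ M) i j < 1 := fun i =>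
      claimC (hirr i j₀).choose i (hirr i j₀).choose_spec
    choose Mf hMf using key
    refine ⟨max (Finset.univ.sup Mf) 1, lt_of_lt_of_le one_pos (le_max_right _ _),
      fun i => ?_⟩
    refine lt_of_le_of_lt (aux_rowsum_anti B hB0 hBrow1 ?_ i) (hMf i)
    exact le_trans (Finset.le_sup (Finset.mem_univ i)) (le_max_left _ _)
  have hBM0 : ∀ i j, 0 ≤ ((Aᵀ) ^ M) i j := by
    rw [hABt]; exact aux_pow_nonneg B hB0 M
  have hBMlt : ∀ i, ∑ j, ((Aᵀ) ^ M) i j < 1 := by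
    rw [hABt]; exact hMlt
  obtain ⟨S, hS, e1, e2⟩ := aux_geomT A M hM0 hBM0 hBMlt
  refine ⟨?_, ?_, ?_⟩
  · show specRad A < 1
    rw [specRad]
    have hmapT : (A.map ((↑) : ℝ → ℂ))ᵀ = B.map ((↑) : ℝ → ℂ) := by
      rw [← Matrix.transpose_map, hABt]
    have hsp : spectrum ℂ (A.map ((↑) : ℝ → ℂ)) = spectrum ℂ (B.map ((↑) : ℝ → ℂ)) := by
      rw [← hmapT, aux_spectrum_transpose]
    rw [hsp]
    exact aux_spec B M hM0 hB0 hMlt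
  · exact ⟨⟨1 - A, S, e1, e2⟩, rfl⟩
  · have hinv : (1 - A)⁻¹ = S := Matrix.inv_eq_right_inv e1
    rw [hinv]
    exact hS
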